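/- The quotient ring ℂ[x,y,z,w]/⟨x*y*z - w^2⟩ is an integral domain but is not a unique factorization domain. -/

import Mathlib

open MvPolynomial

noncomputable section

namespace CharVarAux





abbrev R4 : Type := MvPolynomial (Fin 4) ℂ
abbrev E3 : Type := MvPolynomial (Fin 3) ℂ

lemma pseudo_div {D : Type*} [CommRing D] (c d : D) (g : Polynomial D) :
    ∃ (N : ℕ) (q : Polynomial D) (r : D),
      Polynomial.C c ^ N * g =
        q * (Polynomial.C c * Polynomial.X - Polynomial.C d) + Polynomial.C r := by
  induction g using Polynomial.induction_on' with
  | add p q hp hq =>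
    obtain ⟨N1, q1, r1, h1⟩ := hp
    obtain ⟨N2, q2, r2, h2⟩ := hq
    refine ⟨N1 + N2, Polynomial.C c ^ N2 * q1 + Polynomial.C c ^ N1 * q2,
      c ^ N2 * r1 + c ^ N1 * r2, ?_⟩
    simp only [map_add, map_mul, map_pow, pow_add]
    linear_combination (Polynomial.C c) ^ N2 * h1 + (Polynomial.C c) ^ N1 * h2
  | monomial n a =>
    obtain ⟨s, hs⟩ := sub_dvd_pow_sub_pow (Polynomial.C c * Polynomial.X) (Polynomial.C d) n
    refine ⟨n, Polynomial.C a * s, a * d ^ n, ?_⟩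
    rw [← Polynomial.C_mul_X_pow_eq_monomial]
    simp only [map_mul, map_pow]
    linear_combination Polynomial.C a * hs

lemma prime_X_mv {n : ℕ} (i : Fin (n + 1)) : Prime (X i : MvPolynomial (Fin (n + 1)) ℂ) := by
  have h0 : Prime (X 0 : MvPolynomial (Fin (n + 1)) ℂ) := by
    rw [← MulEquiv.prime_iff (finSuccEquiv ℂ n).toMulEquiv]
    show Prime (finSuccEquiv ℂ n (X 0))
    rw [finSuccEquiv_X_zero]
    exact Polynomial.prime_X
  have h1 := (MulEquiv.prime_iff (renameEquiv ℂ (Equiv.swap (0 : Fin (n+1)) i)).toMulEquiv).mpr h0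
  have h2 : (renameEquiv ℂ (Equiv.swap (0 : Fin (n+1)) i)).toMulEquiv (X 0) = X i := by
    show renameEquiv ℂ _ (X 0) = X i
    simp
  rwa [h2] at h1

lemma exists_C_of_isUnit : ∀ {n : ℕ} (u : MvPolynomial (Fin n) ℂ), IsUnit u → ∃ c : ℂ, u = C c := by
  intro n
  induction n with
  | zero =>
    intro u _
    obtain ⟨c, hc⟩ := C_surjective (Fin 0) u
    exact ⟨c, hc.symm⟩
  | succ n ih =>
    intro u hu
    have hu' : IsUnit (finSuccEquiv ℂ n u) := hu.map (finSuccEquiv ℂ n)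
    obtain ⟨r, hr, hCr⟩ := Polynomial.isUnit_iff.mp hu'
    obtain ⟨c, rfl⟩ := ih r hr
    refine ⟨c, (finSuccEquiv ℂ n).injective ?_⟩
    rw [← hCr]
    simp [finSuccEquiv_apply]

lemma X_not_dvd {n : ℕ} {i j : Fin n} (h : j ≠ i) :
    ¬ (X i : MvPolynomial (Fin n) ℂ) ∣ X j := by
  intro hd
  have h2 := map_dvd (eval (fun k => if k = i then (0:ℂ) else 1)) hd
  simp [h] at h2

lemma common_unit {u : E3} (h1 : u ∣ X 0 * X 1) (h2 : u ∣ X 2 * X 2) : IsUnit u := by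
  by_contra hu
  have hX01 : (X 0 * X 1 : E3) ≠ 0 :=
    mul_ne_zero (prime_X_mv (0 : Fin 3)).ne_zero (prime_X_mv (1 : Fin 3)).ne_zero
  have h0 : u ≠ 0 := by rintro rfl; rw [zero_dvd_iff] at h1; exact hX01 h1
  obtain ⟨q, hqirr, hqu⟩ := WfDvdMonoid.exists_irreducible_factor hu h0
  have hqp : Prime q := UniqueFactorizationMonoid.irreducible_iff_prime.mp hqirr
  have hq2 : q ∣ (X 2 : E3) := (hqp.2.2 _ _ (hqu.trans h2)).elim id id
  obtain ⟨t, ht⟩ := hq2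
  have hX2 : Irreducible (X 2 : E3) := (prime_X_mv (2 : Fin 3)).irreducible
  have htu : IsUnit t := (hX2.isUnit_or_isUnit ht).resolve_left hqirr.not_isUnit
  obtain ⟨v, rfl⟩ := htu
  have hdvd : (X 2 : E3) ∣ q := ⟨(↑v⁻¹ : E3), by rw [ht, mul_assoc]; simp⟩
  have hX2_01 : (X 2 : E3) ∣ X 0 * X 1 := hdvd.trans (hqu.trans h1)
  rcases (prime_X_mv (2 : Fin 3)).2.2 _ _ hX2_01 with h | h
  · exact X_not_dvd (by decide) h
  · exact X_not_dvd (by decide) h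






abbrev fpoly : R4 := X 0 * X 1 * X 2 - X 3 ^ 2
def c0 : E3 := X 0 * X 1
def d0 : E3 := X 2 ^ 2
def P0 : Polynomial E3 := Polynomial.C c0 * Polynomial.X - Polynomial.C d0


lemma hc0 : (c0 : E3) ≠ 0 :=
  mul_ne_zero (prime_X_mv (0 : Fin 3)).ne_zero (prime_X_mv (1 : Fin 3)).ne_zero

lemma natDegree_P0 : P0.natDegree = 1 := by
  rw [P0, Polynomial.natDegree_sub_C, Polynomial.natDegree_C_mul_X _ hc0]

lemma P0_ne_zero : P0 ≠ 0 := by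
  intro h
  have := natDegree_P0
  rw [h] at this
  simp at this

lemma C_dvd_P0_unit (u : E3) (h : Polynomial.C u ∣ P0) : IsUnit u := by
  obtain ⟨t, ht⟩ := h
  have h1 : u ∣ c0 := ⟨t.coeff 1, by
    have : P0.coeff 1 = c0 := by simp [P0, Polynomial.coeff_C]
    rw [← this, ht, Polynomial.coeff_C_mul]⟩
  have h2 : u ∣ d0 := by
    have : P0.coeff 0 = -d0 := by simp [P0]
    have h2' : u ∣ -d0 := ⟨t.coeff 0, by rw [← this, ht, Polynomial.coeff_C_mul]⟩
    exact (dvd_neg.mp h2')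
  rw [c0] at h1
  rw [d0, sq] at h2
  exact common_unit h1 h2

lemma P0_irreducible : Irreducible P0 := by
  constructor
  · intro h
    have := Polynomial.natDegree_eq_zero_of_isUnit h
    rw [natDegree_P0] at this
    exact one_ne_zero this
  · intro P Q hPQ
    have hP : P ≠ 0 := by rintro rfl; rw [zero_mul] at hPQ; exact P0_ne_zero hPQ
    have hQ : Q ≠ 0 := by rintro rfl; rw [mul_zero] at hPQ; exact P0_ne_zero hPQ
    have hsum : P.natDegree + Q.natDegree = 1 := by
      rw [← Polynomial.natDegree_mul hP hQ, ← hPQ, natDegree_P0]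
    rcases Nat.eq_zero_or_pos P.natDegree with h0 | hpos
    · left
      obtain ⟨x, hx⟩ := Polynomial.natDegree_eq_zero.mp h0
      rw [← hx]
      exact Polynomial.isUnit_C.mpr (C_dvd_P0_unit x ⟨Q, by rw [hPQ, ← hx]⟩)
    · right
      have h0Q : Q.natDegree = 0 := by omega
      obtain ⟨x, hx⟩ := Polynomial.natDegree_eq_zero.mp h0Q
      rw [← hx]
      exact Polynomial.isUnit_C.mpr (C_dvd_P0_unit x ⟨P, by rw [hPQ, ← hx]; ring⟩)

lemma hef : finSuccEquiv ℂ 3 fpoly = P0 := by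
  have h1 : (1 : Fin 4) = Fin.succ 0 := rfl
  have h2 : (2 : Fin 4) = Fin.succ 1 := rfl
  have h3 : (3 : Fin 4) = Fin.succ 2 := rfl
  show finSuccEquiv ℂ 3 (X 0 * X 1 * X 2 - X 3 ^ 2) = _
  rw [map_sub, map_mul, map_mul, map_pow, h1, h2, h3, finSuccEquiv_X_zero,
    finSuccEquiv_X_succ, finSuccEquiv_X_succ, finSuccEquiv_X_succ]
  show _ = Polynomial.C (X 0 * X 1) * Polynomial.X - Polynomial.C (X 2 ^ 2)
  rw [map_mul, map_pow]
  ring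

lemma fpoly_irreducible : Irreducible fpoly := by
  have := (MulEquiv.irreducible_iff (finSuccEquiv ℂ 3).toMulEquiv
    (x := fpoly)).mp
  apply this
  show Irreducible (finSuccEquiv ℂ 3 fpoly)
  rw [hef]
  exact P0_irreducible

lemma fpoly_prime : Prime (fpoly : R4) :=
  UniqueFactorizationMonoid.irreducible_iff_prime.mp fpoly_irreducible










def vPhi : Fin 4 → E3 := ![X 0 ^ 2, X 1 ^ 2, X 2 ^ 2, X 0 * X 1 * X 2]
def vPhi' : Fin 3 → E3 := ![X 1 ^ 2, X 2 ^ 2, X 0 * X 1 * X 2]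

def tau (m : Fin 4 →₀ ℕ) : Fin 3 →₀ ℕ :=
  Finsupp.single 0 (2 * m 0 + m 3) + Finsupp.single 1 (2 * m 1 + m 3) +
    Finsupp.single 2 (2 * m 2 + m 3)

def sigma (m : Fin 3 →₀ ℕ) : Fin 3 →₀ ℕ :=
  Finsupp.single 0 (m 2) + Finsupp.single 1 (2 * m 0 + m 2) +
    Finsupp.single 2 (2 * m 1 + m 2)

lemma tau_apply0 (m : Fin 4 →₀ ℕ) : tau m 0 = 2 * m 0 + m 3 := by
  simp [tau, Finsupp.single_apply]
lemma tau_apply1 (m : Fin 4 →₀ ℕ) : tau m 1 = 2 * m 1 + m 3 := by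
  simp [tau, Finsupp.single_apply]
lemma tau_apply2 (m : Fin 4 →₀ ℕ) : tau m 2 = 2 * m 2 + m 3 := by
  simp [tau, Finsupp.single_apply]
lemma sigma_apply0 (m : Fin 3 →₀ ℕ) : sigma m 0 = m 2 := by
  simp [sigma, Finsupp.single_apply]
lemma sigma_apply1 (m : Fin 3 →₀ ℕ) : sigma m 1 = 2 * m 0 + m 2 := by
  simp [sigma, Finsupp.single_apply]
lemma sigma_apply2 (m : Fin 3 →₀ ℕ) : sigma m 2 = 2 * m 1 + m 2 := by
  simp [sigma, Finsupp.single_apply]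

lemma Phi_monomial (m : Fin 4 →₀ ℕ) (a : ℂ) :
    aeval vPhi (monomial m a) = monomial (tau m) a := by
  rw [monomial_eq, monomial_eq, map_mul]
  have hC : aeval vPhi (C a : R4) = (C a : E3) := by
    rw [aeval_C]; rfl
  rw [hC]
  congr 1
  rw [Finsupp.prod_fintype _ _ (fun i => pow_zero _),
      Finsupp.prod_fintype _ _ (fun i => pow_zero _)]
  rw [map_prod]
  rw [Fin.prod_univ_four, Fin.prod_univ_three]
  simp only [map_pow, aeval_X, vPhi, Matrix.cons_val_zero, Matrix.cons_val_one, Matrix.head_cons,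
    Matrix.cons_val_two, Matrix.tail_cons, Matrix.cons_val_three,
    tau_apply0, tau_apply1, tau_apply2]
  ring

lemma Phi'_monomial (m : Fin 3 →₀ ℕ) (a : ℂ) :
    aeval vPhi' (monomial m a) = monomial (sigma m) a := by
  rw [monomial_eq, monomial_eq, map_mul]
  have hC : aeval vPhi' (C a : E3) = (C a : E3) := by
    rw [aeval_C]; rfl
  rw [hC]
  congr 1
  rw [Finsupp.prod_fintype _ _ (fun i => pow_zero _),
      Finsupp.prod_fintype _ _ (fun i => pow_zero _)]
  rw [map_prod]
  rw [Fin.prod_univ_three, Fin.prod_univ_three]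
  simp only [map_pow, aeval_X, vPhi', Matrix.cons_val_zero, Matrix.cons_val_one, Matrix.head_cons,
    Matrix.cons_val_two, Matrix.tail_cons,
    sigma_apply0, sigma_apply1, sigma_apply2]
  ring

lemma sigma_inj {v m : Fin 3 →₀ ℕ} (h : sigma v = sigma m) : v = m := by
  have h0 := congrArg (fun f => f 0) h
  have h1 := congrArg (fun f => f 1) h
  have h2 := congrArg (fun f => f 2) h
  simp only [sigma_apply0, sigma_apply1, sigma_apply2] at h0 h1 h2
  have e0 : v 0 = m 0 := by omega
  have e1 : v 1 = m 1 := by omega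
  have e2 : v 2 = m 2 := by omega
  ext i
  fin_cases i
  · exact e0
  · exact e1
  · exact e2

lemma coeff_single_Phi (P : R4) :
    coeff (Finsupp.single 0 1) (aeval vPhi P) = 0 := by
  induction P using MvPolynomial.induction_on' with
  | monomial m a =>
    rw [Phi_monomial, coeff_monomial, if_neg]
    intro h
    have h0 := congrArg (fun f => f (0 : Fin 3)) h
    have h1 := congrArg (fun f => f (1 : Fin 3)) h
    simp only [tau_apply0, tau_apply1, Finsupp.single_apply] at h0 h1
    simp at h0 h1
    omega
  | add p q hp hq => rw [map_add, coeff_add, hp, hq, add_zero]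

lemma Phi'_inj {r : E3} (h : aeval vPhi' r = 0) : r = 0 := by
  by_contra hr
  obtain ⟨m, hm⟩ := ne_zero_iff.mp hr
  have key : coeff (sigma m) (aeval vPhi' r) = coeff m r := by
    conv_lhs => rw [r.as_sum]
    rw [map_sum, coeff_sum]
    simp_rw [Phi'_monomial, coeff_monomial]
    rw [Finset.sum_eq_single_of_mem m (mem_support_iff.mpr hm)]
    · rw [if_pos rfl]
    · intro v _ hvm
      exact if_neg (fun hc => hvm (sigma_inj hc))
  rw [h] at key
  simp at key
  exact hm key.symm

lemma aeval_rename_succ (r : E3) :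
    aeval vPhi (rename Fin.succ r) = aeval vPhi' r := by
  rw [aeval_rename]
  congr 1

lemma aeval_vPhi_fpoly : aeval vPhi (fpoly : R4) = 0 := by
  simp only [map_sub, map_mul, map_pow, aeval_X, vPhi, Matrix.cons_val_zero,
    Matrix.cons_val_one, Matrix.head_cons, Matrix.cons_val_two, Matrix.tail_cons,
    Matrix.cons_val_three]
  ring

lemma esymm_C (u : E3) :
    (finSuccEquiv ℂ 3).symm (Polynomial.C u) = rename Fin.succ u := by
  have key : (finSuccEquiv ℂ 3).toAlgHom.comp
      (rename (Fin.succ) : E3 →ₐ[ℂ] R4) = Polynomial.CAlgHom := by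
    apply MvPolynomial.algHom_ext
    intro i
    simp [finSuccEquiv_X_succ, Polynomial.CAlgHom]
  have h := congrArg (fun (F : E3 →ₐ[ℂ] Polynomial E3) => F u) key
  simp only [AlgHom.coe_comp, Function.comp_apply, AlgEquiv.toAlgHom_eq_coe,
    AlgHom.coe_coe] at h
  have h' : (finSuccEquiv ℂ 3) ((rename Fin.succ) u) = Polynomial.C u := h
  rw [← h', AlgEquiv.symm_apply_apply]

lemma ker_Phi {g : R4} (hg : aeval vPhi g = 0) : fpoly ∣ g := by
  obtain ⟨N, q, r, hdiv⟩ := pseudo_div c0 d0 (finSuccEquiv ℂ 3 g)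
  have hP0' : (finSuccEquiv ℂ 3).symm P0 = fpoly := by
    rw [← hef, AlgEquiv.symm_apply_apply]
  have key : (rename Fin.succ c0) ^ N * g =
      ((finSuccEquiv ℂ 3).symm q) * fpoly + rename Fin.succ r := by
    have h := congrArg (finSuccEquiv ℂ 3).symm hdiv
    rwa [map_mul, map_pow, esymm_C, AlgEquiv.symm_apply_apply, map_add, map_mul,
      show (Polynomial.C c0 * Polynomial.X - Polynomial.C d0) = P0 from rfl,
      hP0', esymm_C] at h
  have happ := congrArg (aeval vPhi) key
  rw [map_add, map_mul, map_mul, map_pow, hg, mul_zero, aeval_vPhi_fpoly, mul_zero,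
    zero_add, aeval_rename_succ] at happ
  have hr0 : r = 0 := Phi'_inj happ.symm
  rw [hr0, map_zero, add_zero] at key
  have hdvd_prod : fpoly ∣ (rename Fin.succ c0) ^ N * g :=
    ⟨(finSuccEquiv ℂ 3).symm q, by rw [key]; ring⟩
  have hrc : rename Fin.succ c0 = (X 1 * X 2 : R4) := by
    rw [c0, map_mul, rename_X, rename_X]
    rfl
  have hnotdvd : ¬ fpoly ∣ (X 1 * X 2 : R4) := by
    intro h
    rcases fpoly_prime.2.2 _ _ h with h' | h'
    · have h2 := map_dvd (eval (![1, 1, 0, 0] : Fin 4 → ℂ)) h'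
      simp at h2
    · have h2 := map_dvd (eval (![1, 0, 1, 0] : Fin 4 → ℂ)) h'
      simp at h2
  rcases fpoly_prime.2.2 _ _ hdvd_prod with h | h
  · exact absurd (fpoly_prime.dvd_of_dvd_pow (hrc ▸ h)) hnotdvd
  · exact h









lemma isUnit_of_Phi {A : R4} (h : IsUnit (aeval vPhi A)) :
    IsUnit (Ideal.Quotient.mk (Ideal.span {fpoly}) A) := by
  obtain ⟨c, hc⟩ := exists_C_of_isUnit _ h
  have hcne : c ≠ 0 := by
    rintro rfl
    rw [hc, C_0] at h
    exact h.ne_zero rfl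
  have hker : fpoly ∣ A - C c := ker_Phi (by rw [map_sub, hc, aeval_C]; simp)
  have hmk : Ideal.Quotient.mk (Ideal.span {fpoly}) A =
      Ideal.Quotient.mk (Ideal.span {fpoly}) (C c) :=
    (Ideal.Quotient.mk_eq_mk_iff_sub_mem _ _).mpr (Ideal.mem_span_singleton.mpr hker)
  rw [hmk]
  exact IsUnit.of_mul_eq_one (Ideal.Quotient.mk _ (C c⁻¹))
    (by rw [← map_mul, ← C_mul, mul_inv_cancel₀ hcne, C_1, map_one])

lemma not_unit_x : ¬ IsUnit (Ideal.Quotient.mk (Ideal.span {fpoly}) (X 0)) := by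
  intro h
  obtain ⟨t, ht⟩ := h.exists_right_inv
  obtain ⟨T, rfl⟩ := Ideal.Quotient.mk_surjective t
  rw [← map_mul] at ht
  have hmem : X 0 * T - 1 ∈ Ideal.span {fpoly} := by
    rw [← Ideal.Quotient.eq_zero_iff_mem, map_sub, ht, map_one, sub_self]
  have hdvd := Ideal.mem_span_singleton.mp hmem
  have h2 := map_dvd (constantCoeff : R4 →+* ℂ) hdvd
  simp at h2

lemma not_dvd_x_w :
    ¬ (Ideal.Quotient.mk (Ideal.span {fpoly}) (X 0) ∣
       Ideal.Quotient.mk (Ideal.span {fpoly}) (X 3)) := by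
  rintro ⟨t, ht⟩
  obtain ⟨T, rfl⟩ := Ideal.Quotient.mk_surjective t
  rw [← map_mul] at ht
  have hmem : X 3 - X 0 * T ∈ Ideal.span {fpoly} := by
    rw [← Ideal.Quotient.eq_zero_iff_mem, map_sub, ht, sub_self]
  have hdvd := Ideal.mem_span_singleton.mp hmem
  have h2 := map_dvd (aeval (![0, 1, 1, Polynomial.X] : Fin 4 → Polynomial ℂ)) hdvd
  simp at h2
  have h3 := Polynomial.natDegree_le_of_dvd h2 Polynomial.X_ne_zero
  simp at h3

lemma irr_x : Irreducible (Ideal.Quotient.mk (Ideal.span {fpoly}) (X 0)) := by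
  constructor
  · exact not_unit_x
  · intro a b hab
    obtain ⟨A, rfl⟩ := Ideal.Quotient.mk_surjective a
    obtain ⟨B, rfl⟩ := Ideal.Quotient.mk_surjective b
    rw [← map_mul] at hab
    have hmem : X 0 - A * B ∈ Ideal.span {fpoly} := by
      rw [← Ideal.Quotient.eq_zero_iff_mem, map_sub, hab, sub_self]
    obtain ⟨k, hk⟩ := Ideal.mem_span_singleton.mp hmem
    have hPhi : aeval vPhi A * aeval vPhi B = (X 0 : E3) ^ 2 := by
      have h := congrArg (aeval vPhi) hk
      rw [map_sub, map_mul, map_mul, aeval_vPhi_fpoly, zero_mul, aeval_X] at h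
      have hx0 : vPhi 0 = (X 0 : E3) ^ 2 := rfl
      rw [hx0, sub_eq_zero] at h
      exact h.symm
    have hdvd : aeval vPhi A ∣ (X 0 : E3) ^ 2 := ⟨_, hPhi.symm⟩
    obtain ⟨i, hi2, hassoc⟩ := (dvd_prime_pow (prime_X_mv (0 : Fin 3)) 2).mp hdvd
    obtain ⟨u, hu⟩ := hassoc.symm
    interval_cases i
    · left
      exact isUnit_of_Phi (by rw [← hu, pow_zero, one_mul]; exact u.isUnit)
    · exfalso
      obtain ⟨c, hc⟩ := exists_C_of_isUnit (↑u : E3) u.isUnit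
      have h1 := coeff_single_Phi A
      rw [← hu, pow_one, hc, mul_comm, coeff_C_mul, coeff_X] at h1
      rw [if_pos rfl, mul_one] at h1
      rw [h1, C_0] at hc
      exact u.ne_zero hc
    · right
      apply isUnit_of_Phi
      have hcan : (X 0 : E3) ^ 2 * ((↑u : E3) * aeval vPhi B) = (X 0 : E3) ^ 2 * 1 := by
        rw [← mul_assoc, hu, hPhi, mul_one]
      have h2 := mul_left_cancel₀ (pow_ne_zero 2 (prime_X_mv (0 : Fin 3)).ne_zero) hcan
      exact IsUnit.of_mul_eq_one _ (by rw [mul_comm] at h2; exact h2)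


end CharVarAux

open CharVarAux in
/-- The quotient ring `ℂ[x,y,z,w]/⟨x*y*z - w^2⟩` is an integral domain but is not
a unique factorization domain. -/
theorem stmt0 :
    IsDomain (MvPolynomial (Fin 4) ℂ ⧸
      Ideal.span {(X 0 * X 1 * X 2 - X 3 ^ 2 : MvPolynomial (Fin 4) ℂ)}) ∧
    ∀ [IsDomain (MvPolynomial (Fin 4) ℂ ⧸
      Ideal.span {(X 0 * X 1 * X 2 - X 3 ^ 2 : MvPolynomial (Fin 4) ℂ)})],
      ¬ UniqueFactorizationMonoid (MvPolynomial (Fin 4) ℂ ⧸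
        Ideal.span {(X 0 * X 1 * X 2 - X 3 ^ 2 : MvPolynomial (Fin 4) ℂ)}) := by
  have hprime_span : (Ideal.span {(fpoly : R4)}).IsPrime :=
    (Ideal.span_singleton_prime fpoly_prime.ne_zero).mpr fpoly_prime
  constructor
  · haveI := hprime_span
    exact Ideal.Quotient.isDomain _
  · intro hdom hufm
    have hpr : Prime (Ideal.Quotient.mk (Ideal.span {(fpoly : R4)}) (X 0)) :=
      UniqueFactorizationMonoid.irreducible_iff_prime.mp irr_x
    have hx : (Ideal.Quotient.mk (Ideal.span {(fpoly : R4)}) (X 3)) *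
        (Ideal.Quotient.mk _ (X 3)) =
        Ideal.Quotient.mk _ (X 0) * Ideal.Quotient.mk _ (X 1 * X 2) := by
      rw [← map_mul, ← map_mul]
      exact (Ideal.Quotient.mk_eq_mk_iff_sub_mem _ _).mpr
        (Ideal.mem_span_singleton.mpr ⟨-1, by ring⟩)
    rcases hpr.2.2 _ _ ⟨_, hx⟩ with h | h
    · exact not_dvd_x_w h
    · exact not_dvd_x_w h
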